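/- Let K ⊆ Φ₀ be consistent and deductively closed and ÷ an AGM contraction function on K (satisfying (K−1)–(K−8)). On the canonical space S of maximally consistent sets, with 𝓑(s@) = ‖K‖ and f(s,‖φ‖) = ‖K÷¬φ‖ ∩ ‖φ‖, for every φ with ‖¬φ‖ ≠ ∅ and every ψ: ψ ∈ K÷φ if and only if ‖K‖ ⊆ ‖ψ‖ and ‖K÷φ‖ ∩ ‖¬φ‖ ⊆ ‖ψ‖. -/

import Mathlib

/-- Boolean propositional formulas over countably many atoms. -/
inductive Fm where
  | atom : ℕ → Fm
  | neg  : Fm → Fm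
  | disj : Fm → Fm → Fm

namespace Fm

def imp (φ ψ : Fm) : Fm := disj (neg φ) ψ
def conj (φ ψ : Fm) : Fm := neg (disj (neg φ) (neg ψ))
def biimp (φ ψ : Fm) : Fm := conj (imp φ ψ) (imp ψ φ)

def eval (v : ℕ → Bool) : Fm → Bool
  | atom n => v n
  | neg φ => !(eval v φ)
  | disj φ ψ => eval v φ || eval v ψ

def Taut (φ : Fm) : Prop := ∀ v : ℕ → Bool, eval v φ = true

end Fm

/-- Classical propositional consequence: ψ ∈ Cn K iff some finite list of members
of K has ψ as a tautological consequence. -/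
def Cn (K : Set Fm) : Set Fm :=
  {ψ | ∃ l : List Fm, (∀ φ ∈ l, φ ∈ K) ∧
    ∀ v : ℕ → Bool, (∀ φ ∈ l, Fm.eval v φ = true) → Fm.eval v ψ = true}

def Consistent (A : Set Fm) : Prop := Cn A ≠ Set.univ

/-- The eight AGM contraction postulates. -/
structure AGM (K : Set Fm) (div : Fm → Set Fm) : Prop where
  closure : ∀ φ : Fm, div φ = Cn (div φ)
  inclusion : ∀ φ : Fm, div φ ⊆ K
  vacuity : ∀ φ : Fm, φ ∉ K → K ⊆ div φ
  success : ∀ φ : Fm, ¬ Fm.Taut φ → φ ∉ div φ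
  recovery : ∀ φ : Fm, φ ∈ K → K ⊆ Cn (div φ ∪ {φ})
  extensionality : ∀ φ ψ : Fm, Fm.Taut (Fm.biimp φ ψ) → div φ = div ψ
  conjOverlap : ∀ φ ψ : Fm, div φ ∩ div ψ ⊆ div (Fm.conj φ ψ)
  conjInclusion : ∀ φ ψ : Fm, φ ∉ div (Fm.conj φ ψ) → div (Fm.conj φ ψ) ⊆ div φ

/-- Maximally consistent set of formulas. -/
def MCS (Γ : Set Fm) : Prop :=
  Consistent Γ ∧ ∀ Δ : Set Fm, Γ ⊆ Δ → Consistent Δ → Δ = Γ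

/-- The canonical state space: maximally consistent sets. -/
def CS := {Γ : Set Fm // MCS Γ}

/-- ‖φ‖ for a formula. -/
def tsF (φ : Fm) : Set CS := {s | φ ∈ s.val}

/-- ‖Ψ‖ for a set of formulas. -/
def tsS (Ψ : Set Fm) : Set CS := {s | Ψ ⊆ s.val}

/-! ### Auxiliary development -/

deriving instance DecidableEq for Fm

/-- A canonical contradiction. -/
def fmBot : Fm := Fm.neg (Fm.disj (Fm.atom 0) (Fm.neg (Fm.atom 0)))

lemma fmBot_eval (v : ℕ → Bool) : Fm.eval v fmBot = false := by
  simp [fmBot, Fm.eval]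

lemma subset_cn {A : Set Fm} : A ⊆ Cn A := fun ψ h =>
  ⟨[ψ], by simp [h], by intro v hv; exact hv ψ (by simp)⟩

lemma cn_mono {A B : Set Fm} (h : A ⊆ B) : Cn A ⊆ Cn B := by
  rintro ψ ⟨l, hl, hsem⟩
  exact ⟨l, fun φ hφ => h (hl φ hφ), hsem⟩

lemma cn_taut {A : Set Fm} {ψ : Fm} (h : Fm.Taut ψ) : ψ ∈ Cn A :=
  ⟨[], by simp, fun v _ => h v⟩

lemma cn_mp {A : Set Fm} {φ ψ : Fm} (h1 : Fm.imp φ ψ ∈ Cn A) (h2 : φ ∈ Cn A) :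
    ψ ∈ Cn A := by
  obtain ⟨l1, hl1, hs1⟩ := h1
  obtain ⟨l2, hl2, hs2⟩ := h2
  refine ⟨l1 ++ l2, ?_, ?_⟩
  · intro χ hχ
    rcases List.mem_append.1 hχ with h | h
    exacts [hl1 χ h, hl2 χ h]
  · intro v hv
    have a1 := hs1 v (fun χ hχ => hv χ (List.mem_append_left _ hχ))
    have a2 := hs2 v (fun χ hχ => hv χ (List.mem_append_right _ hχ))
    simp only [Fm.imp, Fm.eval, Bool.or_eq_true, Bool.not_eq_true'] at a1
    rcases a1 with h | h
    · rw [a2] at h; exact absurd h (by simp)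
    · exact h

lemma cn_close {A : Set Fm} {ψ : Fm} (l : List Fm) (hl : ∀ φ ∈ l, φ ∈ Cn A)
    (hsem : ∀ v : ℕ → Bool, (∀ φ ∈ l, Fm.eval v φ = true) → Fm.eval v ψ = true) :
    ψ ∈ Cn A := by
  induction l generalizing ψ with
  | nil => exact cn_taut (fun v => hsem v (by simp))
  | cons φ t ih =>
    have himp : Fm.imp φ ψ ∈ Cn A := by
      refine ih (fun χ hχ => hl χ (List.mem_cons_of_mem _ hχ)) ?_
      intro v hv
      simp only [Fm.imp, Fm.eval, Bool.or_eq_true, Bool.not_eq_true'] at *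
      cases h : Fm.eval v φ with
      | false => exact Or.inl rfl
      | true =>
        exact Or.inr (hsem v (by
          intro χ hχ
          rcases List.mem_cons.1 hχ with rfl | hχ
          · exact h
          · exact hv χ hχ))
    exact cn_mp himp (hl φ (List.mem_cons_self))

lemma cn_idem {A : Set Fm} : Cn (Cn A) = Cn A := by
  apply Set.Subset.antisymm _ subset_cn
  rintro ψ ⟨l, hl, hsem⟩
  exact cn_close l hl hsem

lemma deduction {A : Set Fm} {α ψ : Fm} :
    ψ ∈ Cn (A ∪ {α}) ↔ Fm.imp α ψ ∈ Cn A := by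
  constructor
  · rintro ⟨l, hl, hsem⟩
    refine ⟨l.filter (· ≠ α), ?_, ?_⟩
    · intro χ hχ
      have := List.mem_filter.1 hχ
      rcases hl χ this.1 with h | h
      · exact h
      · exact absurd h (by simpa using this.2)
    · intro v hv
      simp only [Fm.imp, Fm.eval, Bool.or_eq_true, Bool.not_eq_true']
      cases hα : Fm.eval v α with
      | false => exact Or.inl rfl
      | true =>
        refine Or.inr (hsem v ?_)
        intro χ hχ
        by_cases hc : χ = α
        · exact hc ▸ hα
        · exact hv χ (List.mem_filter.2 ⟨hχ, by simpa using hc⟩)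
  · intro h
    have h1 : Fm.imp α ψ ∈ Cn (A ∪ {α}) := cn_mono Set.subset_union_left h
    have h2 : α ∈ Cn (A ∪ {α}) := subset_cn (Or.inr rfl)
    exact cn_mp h1 h2

lemma inconsistent_iff {A : Set Fm} : ¬ Consistent A ↔ fmBot ∈ Cn A := by
  constructor
  · intro h
    have : Cn A = Set.univ := by simpa [Consistent] using h
    rw [this]; trivial
  · intro h hc
    apply hc
    ext ψ
    simp only [Set.mem_univ, iff_true]
    refine cn_close [fmBot] (by simpa using h) ?_
    intro v hv
    have := hv fmBot (by simp)
    rw [fmBot_eval] at this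
    exact absurd this (by simp)

lemma consistent_of_not_mem {A : Set Fm} {ψ : Fm} (h : ψ ∉ Cn A) : Consistent A := by
  intro hc
  exact h (by rw [show Cn A = Set.univ from by simpa [Consistent] using hc]; trivial)

lemma chain_list {c : Set (Set Fm)} (hchain : IsChain (· ⊆ ·) c) (hne : c.Nonempty)
    (l : List Fm) (hl : ∀ χ ∈ l, χ ∈ ⋃₀ c) : ∃ t ∈ c, ∀ χ ∈ l, χ ∈ t := by
  induction l with
  | nil => obtain ⟨t, ht⟩ := hne; exact ⟨t, ht, by simp⟩
  | cons χ tl ih =>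
    obtain ⟨t, htc, htl⟩ := ih (fun χ' h' => hl χ' (List.mem_cons_of_mem _ h'))
    obtain ⟨u, huc, hχu⟩ := hl χ (List.mem_cons_self)
    rcases hchain.total htc huc with hsub | hsub
    · exact ⟨u, huc, fun χ' h' => by
        rcases List.mem_cons.1 h' with rfl | h'
        · exact hχu
        · exact hsub (htl χ' h')⟩
    · exact ⟨t, htc, fun χ' h' => by
        rcases List.mem_cons.1 h' with rfl | h'
        · exact hsub hχu
        · exact htl χ' h'⟩

/-- Lindenbaum's lemma. -/
lemma lindenbaum {A : Set Fm} (h : Consistent A) : ∃ Γ : Set Fm, MCS Γ ∧ A ⊆ Γ := by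
  have H : ∀ c ⊆ {Δ : Set Fm | Consistent Δ}, IsChain (· ⊆ ·) c → c.Nonempty →
      ∃ ub ∈ {Δ : Set Fm | Consistent Δ}, ∀ s ∈ c, s ⊆ ub := by
    intro c hc hchain hne
    refine ⟨⋃₀ c, ?_, fun s hs => Set.subset_sUnion_of_mem hs⟩
    intro hcon
    have hbot : fmBot ∈ Cn (⋃₀ c) := by
      rw [show Cn (⋃₀ c) = Set.univ from by simpa [Consistent] using hcon]; trivial
    obtain ⟨l, hl, hsem⟩ := hbot
    have : ∃ t ∈ c, ∀ χ ∈ l, χ ∈ t := chain_list hchain hne l hl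
    obtain ⟨t, htc, htl⟩ := this
    have : fmBot ∈ Cn t := ⟨l, htl, hsem⟩
    exact (inconsistent_iff.2 this) (hc htc)
  obtain ⟨m, hAm, hm⟩ := zorn_subset_nonempty {Δ : Set Fm | Consistent Δ} H A h
  refine ⟨m, ⟨hm.prop, ?_⟩, hAm⟩
  intro Δ hsub hΔ
  exact hm.eq_of_ge hΔ hsub

lemma mcs_cn {Γ : Set Fm} (h : MCS Γ) : Cn Γ = Γ := by
  refine h.2 (Cn Γ) subset_cn ?_
  intro hc
  exact h.1 (by rw [← cn_idem (A := Γ)]; exact hc)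

lemma mcs_not_both {Γ : Set Fm} (h : MCS Γ) {ψ : Fm} (hn : Fm.neg ψ ∈ Γ) : ψ ∉ Γ := by
  intro hψ
  apply h.1
  have hbot : fmBot ∈ Cn Γ := by
    refine cn_close [ψ, Fm.neg ψ] ?_ ?_
    · intro χ hχ
      rcases List.mem_cons.1 hχ with rfl | hχ
      · exact subset_cn hψ
      · simp only [List.mem_singleton] at hχ
        exact hχ ▸ subset_cn hn
    · intro v hv
      have h1 := hv ψ (by simp)
      have h2 := hv (Fm.neg ψ) (by simp)
      simp [Fm.eval, h1] at h2
  have := inconsistent_iff.2 hbot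
  simpa [Consistent, not_not] using this

/-- Separation: if ψ is not a consequence of A, some MCS contains A but not ψ. -/
lemma separation {A : Set Fm} {ψ : Fm} (h : ψ ∉ Cn A) :
    ∃ Γ : Set Fm, MCS Γ ∧ A ⊆ Γ ∧ ψ ∉ Γ := by
  have hcons : Consistent (A ∪ {Fm.neg ψ}) := by
    intro hc
    apply h
    have hψ : ψ ∈ Cn (A ∪ {Fm.neg ψ}) := by
      rw [show Cn (A ∪ {Fm.neg ψ}) = Set.univ from by simpa [Consistent] using hc]; trivial
    have himp : Fm.imp (Fm.neg ψ) ψ ∈ Cn A := deduction.1 hψ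
    refine cn_close [Fm.imp (Fm.neg ψ) ψ] (by simpa using himp) ?_
    intro v hv
    have := hv (Fm.imp (Fm.neg ψ) ψ) (by simp)
    simp only [Fm.imp, Fm.eval, Bool.or_eq_true, Bool.not_eq_true'] at this ⊢
    rcases this with h1 | h1
    · simpa using h1
    · exact h1
  obtain ⟨Γ, hΓ, hsub⟩ := lindenbaum hcons
  exact ⟨Γ, hΓ, fun χ hχ => hsub (Or.inl hχ),
    mcs_not_both hΓ (hsub (Or.inr rfl))⟩

/-- the representation theorem on the canonical space. -/
theorem canonical_representation (K : Set Fm) (hcons : Consistent K)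
    (hclosed : K = Cn K) (div : Fm → Set Fm) (hagm : AGM K div)
    (φ : Fm) (hφ : (tsF (Fm.neg φ)).Nonempty) :
    ∀ ψ : Fm, ψ ∈ div φ ↔
      (tsS K ⊆ tsF ψ ∧ tsS (div φ) ∩ tsF (Fm.neg φ) ⊆ tsF ψ) := by
  -- φ is not a tautology
  have hnt : ¬ Fm.Taut φ := by
    intro ht
    obtain ⟨s, hs⟩ := hφ
    have : φ ∉ s.val := mcs_not_both s.property hs
    exact this ((mcs_cn s.property) ▸ cn_taut ht)
  have hsucc := hagm.success φ hnt
  -- div φ ∪ {¬φ} is consistent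
  have hdivcons : Consistent (div φ ∪ {Fm.neg φ}) := by
    intro hc
    apply hsucc
    have hφmem : φ ∈ Cn (div φ ∪ {Fm.neg φ}) := by
      rw [show Cn (div φ ∪ {Fm.neg φ}) = Set.univ from by simpa [Consistent] using hc]
      trivial
    have himp : Fm.imp (Fm.neg φ) φ ∈ Cn (div φ) := deduction.1 hφmem
    have : φ ∈ Cn (div φ) := by
      refine cn_close [Fm.imp (Fm.neg φ) φ] (by simpa using himp) ?_
      intro v hv
      have := hv (Fm.imp (Fm.neg φ) φ) (by simp)
      simp only [Fm.imp, Fm.eval, Bool.or_eq_true, Bool.not_eq_true'] at this ⊢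
      rcases this with h1 | h1
      · simpa using h1
      · exact h1
    exact (hagm.closure φ) ▸ this
  intro ψ
  constructor
  · intro hψ
    refine ⟨fun s hs => hs (hagm.inclusion φ hψ), fun s hs => hs.1 hψ⟩
  · rintro ⟨h1, h2⟩
    -- ψ ∈ K
    have hψK : ψ ∈ K := by
      by_contra hn
      have hn' : ψ ∉ Cn K := hclosed ▸ hn
      obtain ⟨Γ, hΓ, hsub, hns⟩ := separation hn'
      exact hns (h1 (show (⟨Γ, hΓ⟩ : CS) ∈ tsS K from hsub))
    -- ψ ∈ Cn (div φ ∪ {¬φ})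
    have hψC : ψ ∈ Cn (div φ ∪ {Fm.neg φ}) := by
      by_contra hn
      obtain ⟨Γ, hΓ, hsub, hns⟩ := separation hn
      have hmem : (⟨Γ, hΓ⟩ : CS) ∈ tsS (div φ) ∩ tsF (Fm.neg φ) :=
        ⟨fun χ hχ => hsub (Or.inl hχ), hsub (Or.inr rfl)⟩
      exact hns (h2 hmem)
    -- combine via Lemma 3(ii)
    by_cases hφK : φ ∈ K
    · have hrec : ψ ∈ Cn (div φ ∪ {φ}) := hagm.recovery φ hφK hψK
      have h3 : Fm.imp φ ψ ∈ Cn (div φ) := deduction.1 hrec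
      have h4 : Fm.imp (Fm.neg φ) ψ ∈ Cn (div φ) := deduction.1 hψC
      have : ψ ∈ Cn (div φ) := by
        refine cn_close [Fm.imp φ ψ, Fm.imp (Fm.neg φ) ψ] ?_ ?_
        · intro χ hχ
          rcases List.mem_cons.1 hχ with rfl | hχ
          · exact h3
          · simp only [List.mem_singleton] at hχ
            exact hχ ▸ h4
        · intro v hv
          have a1 := hv _ (List.mem_cons_self)
          have a2 := hv (Fm.imp (Fm.neg φ) ψ) (by simp)
          simp only [Fm.imp, Fm.eval, Bool.or_eq_true, Bool.not_eq_true',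
            Bool.not_eq_true] at a1 a2
          rcases a1 with b1 | b1
          · rcases a2 with b2 | b2
            · simp [b1] at b2
            · exact b2
          · exact b1
      exact (hagm.closure φ) ▸ this
    · exact hagm.vacuity φ hφK hψK
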